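/- Let d ≥ 1 and let U : ℝ^d → ℝ be differentiable with score s(x) = -∇U(x), where s is L-Lipschitz and there exist constants c > 0, R > 0 and p ∈ (1,2] such that U(x) ≥ c‖x‖^p whenever ‖x‖ ≥ R. Then for every θ ∈ ℝ^d and every α > 0, the function x ↦ exp(-U(x) - α⟨θ, s(x)⟩) is integrable on ℝ^d with respect to Lebesgue measure; equivalently, the normalizing constant Z_θ = ∫_{ℝ^d} exp(-U(x))·exp(-α⟨θ, s(x)⟩) dx of the score-tilted surrogate is finite. -/

import Mathlib

open MeasureTheory
open Real Set
open scoped RealInnerProductSpace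

lemma aux1 {b p : ℝ} (hb : 0 < b) (hp : 1 ≤ p) :
    Integrable (fun t : ℝ => Real.exp (-b * |t| ^ p)) := by
  have h := integrableOn_rpow_mul_exp_neg_mul_rpow (s := 0) (by norm_num) (by linarith) hb
  have hI : IntegrableOn (fun t : ℝ => Real.exp (-b * |t| ^ p)) (Ioi 0) := by
    refine (h.congr_fun (fun x hx => ?_) measurableSet_Ioi)
    dsimp only; rw [Real.rpow_zero, one_mul, abs_of_pos hx]
  rw [← integrableOn_univ, ← @Iio_union_Ici _ _ (0 : ℝ), integrableOn_union,
    integrableOn_Ici_iff_integrableOn_Ioi]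
  refine ⟨?_, hI⟩
  rw [← (Measure.measurePreserving_neg (volume : Measure ℝ)).integrableOn_comp_preimage
      (Homeomorph.neg ℝ).measurableEmbedding]
  simp only [Function.comp_def, neg_preimage, neg_Iio, neg_neg, neg_zero, abs_neg]
  exact hI

lemma aux2 {d : ℕ} (hd : 0 < d) {b p : ℝ} (hb : 0 < b) (hp : 1 ≤ p) :
    Integrable (fun x : EuclideanSpace ℝ (Fin d) => Real.exp (-b * ‖x‖ ^ p)) := by
  set b' := b / d with hb'def
  have hb' : 0 < b' := div_pos hb (by exact_mod_cast hd)
  have h1 : Integrable (fun v : Fin d → ℝ => ∏ i, Real.exp (-b' * |v i| ^ p)) :=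
    Integrable.fintype_prod (f := fun _ (t : ℝ) => Real.exp (-b' * |t| ^ p))
      (fun _ => aux1 hb' hp)
  have hmp := (EuclideanSpace.volume_preserving_symm_measurableEquiv_toLp (Fin d)).symm
  have h2 : Integrable (fun x : EuclideanSpace ℝ (Fin d) => ∏ i, Real.exp (-b' * |x i| ^ p)) := by
    rw [← MeasurePreserving.integrable_comp_emb hmp
      (MeasurableEquiv.measurableEmbedding _)]
    exact h1
  refine h2.mono' ?_ (ae_of_all _ fun x => ?_)
  · exact (Real.continuous_exp.comp
      (continuous_const.mul
        (continuous_norm.rpow_const (fun x => Or.inr (by positivity))))).aestronglyMeasurable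
  · rw [Real.norm_eq_abs, abs_of_pos (Real.exp_pos _), ← Real.exp_sum]
    apply Real.exp_le_exp.2
    have hsum : ∑ i, |x i| ^ p ≤ (d : ℝ) * ‖x‖ ^ p := by
      calc ∑ i, |x i| ^ p ≤ ∑ _i : Fin d, ‖x‖ ^ p := by
            refine Finset.sum_le_sum fun i _ => ?_
            refine Real.rpow_le_rpow (abs_nonneg _) ?_ (by linarith)
            rw [EuclideanSpace.norm_eq, ← Real.sqrt_sq_eq_abs (x i)]
            refine Real.sqrt_le_sqrt ?_
            simp only [Real.norm_eq_abs, sq_abs]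
            exact Finset.single_le_sum (fun j _ => sq_nonneg (x j)) (Finset.mem_univ i)
        _ = (d : ℝ) * ‖x‖ ^ p := by simp [Finset.sum_const, nsmul_eq_mul]
    have : ∑ i, -b' * |x i| ^ p = -b' * ∑ i, |x i| ^ p := by
      rw [Finset.mul_sum]
    rw [this]
    have hb'd : b' * (d : ℝ) = b := by
      rw [hb'def]; exact div_mul_cancel₀ b (by exact_mod_cast hd.ne')
    have key : b' * ((d : ℝ) * ‖x‖ ^ p) = b * ‖x‖ ^ p := by rw [← hb'd]; ring
    nlinarith [mul_le_mul_of_nonneg_left hsum hb'.le]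

/-- **Well-posedness of the score-tilted surrogate.**
If `U : ℝ^d → ℝ` is differentiable with `L`-Lipschitz score `s = -∇U` and
`U x ≥ c‖x‖^p` for `‖x‖ ≥ R` with `p ∈ (1,2]`, then for every `θ` and `α > 0`
the score-tilted integrand `x ↦ exp(-U x - α⟨θ, s x⟩)` is Lebesgue-integrable,
i.e. the normalizing constant `Z_θ` is finite. -/
theorem score_tilted_surrogate_integrable
    (d : ℕ) (hd : 1 ≤ d)
    (U : EuclideanSpace ℝ (Fin d) → ℝ) (hU : Differentiable ℝ U)
    (s : EuclideanSpace ℝ (Fin d) → EuclideanSpace ℝ (Fin d))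
    (hs : ∀ x, s x = -gradient U x)
    (L : ℝ) (hLip : ∀ x x', ‖s x - s x'‖ ≤ L * ‖x - x'‖)
    (c R p : ℝ) (hc : 0 < c) (hR : 0 < R) (hp1 : 1 < p) (hp2 : p ≤ 2)
    (hTail : ∀ x : EuclideanSpace ℝ (Fin d), R ≤ ‖x‖ → c * ‖x‖ ^ p ≤ U x)
    (θ : EuclideanSpace ℝ (Fin d)) (α : ℝ) (hα : 0 < α) :
    Integrable
      (fun x : EuclideanSpace ℝ (Fin d) =>
        Real.exp (-U x) * Real.exp (-(α * ⟪θ, s x⟫))) volume := by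
  -- continuity of s from Lipschitz property
  have hscont : Continuous s := by
    have : LipschitzWith (Real.toNNReal |L|) s := by
      apply LipschitzWith.of_dist_le_mul
      intro x y
      rw [dist_eq_norm, dist_eq_norm]
      calc ‖s x - s y‖ ≤ L * ‖x - y‖ := hLip x y
        _ ≤ |L| * ‖x - y‖ := mul_le_mul_of_nonneg_right (le_abs_self L) (norm_nonneg _)
        _ = (Real.toNNReal |L|) * ‖x - y‖ := by rw [Real.coe_toNNReal _ (abs_nonneg L)]
    exact this.continuous
  set f := fun x : EuclideanSpace ℝ (Fin d) =>
    Real.exp (-U x) * Real.exp (-(α * ⟪θ, s x⟫)) with hf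
  have hfc : Continuous f := by
    apply Continuous.mul
    · exact Real.continuous_exp.comp hU.continuous.neg
    · exact Real.continuous_exp.comp (continuous_const.mul (continuous_const.inner hscont)).neg
  set A := α * ‖θ‖ * ‖s 0‖ with hAdef
  set B := α * ‖θ‖ * |L| with hBdef
  have hA : 0 ≤ A := by positivity
  have hB : 0 ≤ B := by positivity
  have hbound : ∀ x, -(α * ⟪θ, s x⟫) ≤ A + B * ‖x‖ := by
    intro x
    have h1 : |⟪θ, s x⟫| ≤ ‖θ‖ * ‖s x‖ := abs_real_inner_le_norm θ (s x)
    have h2 : ‖s x‖ ≤ ‖s 0‖ + |L| * ‖x‖ := by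
      have h3 : ‖s x‖ - ‖s 0‖ ≤ ‖s x - s 0‖ := norm_sub_norm_le _ _
      have h3' : ‖s x - s 0‖ ≤ L * ‖x‖ := by simpa using hLip x 0
      have h4 : L * ‖x‖ ≤ |L| * ‖x‖ := mul_le_mul_of_nonneg_right (le_abs_self L) (norm_nonneg x)
      linarith
    have h5 : -(⟪θ, s x⟫) ≤ |⟪θ, s x⟫| := neg_le_abs _
    have e2 : α * (-(⟪θ, s x⟫)) ≤ α * (‖θ‖ * ‖s x‖) :=
      mul_le_mul_of_nonneg_left (h5.trans h1) hα.le
    have e3 : α * (‖θ‖ * ‖s x‖) ≤ α * (‖θ‖ * (‖s 0‖ + |L| * ‖x‖)) :=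
      mul_le_mul_of_nonneg_left (mul_le_mul_of_nonneg_left h2 (norm_nonneg θ)) hα.le
    have e4 : α * (‖θ‖ * (‖s 0‖ + |L| * ‖x‖)) = A + B * ‖x‖ := by
      rw [hAdef, hBdef]; ring
    linarith [e2, e3]
  -- threshold radius
  set q := p - 1 with hq
  have hq0 : 0 < q := by simp only [hq]; linarith
  set T := (2 * B / c + 1) ^ q⁻¹ with hT
  have hT0 : 0 ≤ T := Real.rpow_nonneg (by positivity) _
  set R₁ := max R (max 1 T) with hR₁
  have hR₁1 : (1 : ℝ) ≤ R₁ := le_max_of_le_right (le_max_left _ _)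
  have hR₁R : R ≤ R₁ := le_max_left _ _
  have hR₁T : T ≤ R₁ := le_max_of_le_right (le_max_right _ _)
  have hR₁0 : 0 < R₁ := lt_of_lt_of_le one_pos hR₁1
  have houter : ∀ x : EuclideanSpace ℝ (Fin d), R₁ ≤ ‖x‖ → B * ‖x‖ ≤ c / 2 * ‖x‖ ^ p := by
    intro x hx
    have hx1 : (1 : ℝ) ≤ ‖x‖ := le_trans hR₁1 hx
    have hx0 : 0 < ‖x‖ := by linarith
    have hTq : T ^ q = 2 * B / c + 1 := Real.rpow_inv_rpow (by positivity) hq0.ne'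
    have hq' : 2 * B / c ≤ ‖x‖ ^ q := by
      have h7 : T ^ q ≤ ‖x‖ ^ q := Real.rpow_le_rpow hT0 (le_trans hR₁T hx) hq0.le
      rw [hTq] at h7; linarith
    have hsplit : ‖x‖ ^ p = ‖x‖ ^ q * ‖x‖ := by
      have hpq : p = q + 1 := by rw [hq]; ring
      rw [hpq, Real.rpow_add hx0, Real.rpow_one]
    have h8 : 2 * B ≤ ‖x‖ ^ q * c := (div_le_iff₀ hc).mp hq'
    have h6 : B ≤ c / 2 * ‖x‖ ^ q := by linarith
    rw [hsplit]
    nlinarith [mul_le_mul_of_nonneg_right h6 (norm_nonneg x)]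
  -- bound on the closed ball
  obtain ⟨C₀, hC₀⟩ :=
    (isCompact_closedBall (0 : EuclideanSpace ℝ (Fin d)) R₁).exists_bound_of_continuousOn
      hfc.continuousOn
  have hC₀0 : 0 ≤ C₀ :=
    (norm_nonneg (f 0)).trans (hC₀ 0 (Metric.mem_closedBall_self hR₁0.le))
  set M := Real.exp A + C₀ * Real.exp (c / 2 * R₁ ^ p) with hM
  have hdom : ∀ x, ‖f x‖ ≤ M * Real.exp (-(c / 2) * ‖x‖ ^ p) := by
    intro x
    have hfval : f x = Real.exp (-U x + -(α * ⟪θ, s x⟫)) := by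
      rw [hf, Real.exp_add]
    have hfpos : 0 < f x := by rw [hf]; positivity
    rw [Real.norm_eq_abs, abs_of_pos hfpos]
    rcases le_or_gt R₁ ‖x‖ with hx | hx
    · have hU' : c * ‖x‖ ^ p ≤ U x := hTail x (hR₁R.trans hx)
      have hin : -(α * ⟪θ, s x⟫) ≤ A + B * ‖x‖ := hbound x
      have hBx : B * ‖x‖ ≤ c / 2 * ‖x‖ ^ p := houter x hx
      rw [hfval]
      have step : -U x + -(α * ⟪θ, s x⟫) ≤ A + -(c / 2) * ‖x‖ ^ p := by linarith
      calc Real.exp (-U x + -(α * ⟪θ, s x⟫)) ≤ Real.exp (A + -(c / 2) * ‖x‖ ^ p) :=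
            Real.exp_le_exp.2 step
        _ = Real.exp A * Real.exp (-(c / 2) * ‖x‖ ^ p) := Real.exp_add _ _
        _ ≤ M * Real.exp (-(c / 2) * ‖x‖ ^ p) := by
            apply mul_le_mul_of_nonneg_right _ (Real.exp_pos _).le
            rw [hM]
            nlinarith [Real.exp_pos (c / 2 * R₁ ^ p), hC₀0]
    · have hmem : x ∈ Metric.closedBall (0 : EuclideanSpace ℝ (Fin d)) R₁ := by
        simpa [Metric.mem_closedBall, dist_zero_right] using hx.le
      have h1 : f x ≤ C₀ := by
        have := hC₀ x hmem
        rw [Real.norm_eq_abs, abs_of_pos hfpos] at this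
        exact this
      have h2 : ‖x‖ ^ p ≤ R₁ ^ p :=
        Real.rpow_le_rpow (norm_nonneg x) hx.le (by linarith)
      have h3 : (1 : ℝ) ≤ Real.exp (c / 2 * R₁ ^ p) * Real.exp (-(c / 2) * ‖x‖ ^ p) := by
        rw [← Real.exp_add]
        apply Real.one_le_exp
        nlinarith
      calc f x ≤ C₀ := h1
        _ ≤ C₀ * (Real.exp (c / 2 * R₁ ^ p) * Real.exp (-(c / 2) * ‖x‖ ^ p)) :=
            le_mul_of_one_le_right hC₀0 h3
        _ ≤ M * Real.exp (-(c / 2) * ‖x‖ ^ p) := by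
            rw [hM]
            nlinarith [mul_pos (Real.exp_pos A) (Real.exp_pos (-(c / 2) * ‖x‖ ^ p))]
  exact Integrable.mono' ((aux2 (by omega) (by positivity) hp1.le).const_mul M)
    hfc.aestronglyMeasurable (ae_of_all _ hdom)
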